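/- Let h ≥ 1, let U_S be a unitary 2^h × 2^h complex matrix with first column ψ = U_S e₀, and for p ∈ {0,1} let U^{(S)}_{(p)} be the unitary on ℂ² ⊗ ℂ^{2^h} ⊗ ℂ² ⊗ ℂ^{2^h} defined as in the context. Define on ℂ² ⊗ (ℂ² ⊗ ℂ^{2^h} ⊗ ℂ² ⊗ ℂ^{2^h}) the operator U′ = (H ⊗ I)·(|0⟩⟨0| ⊗ U^{(S)}_{(0)} + |1⟩⟨1| ⊗ (i·U^{(S)}_{(1)}))·(H ⊗ I), with H = (1/√2)[[1,1],[1,−1]] acting on the new first qubit. Then U′ is unitary, and for every k ∈ {0, …, 2^h−1}, writing U′(e₀ ⊗ e₀ ⊗ e₀ ⊗ e₀ ⊗ e_k) = e₀ ⊗ e₀ ⊗ u + r, where r is orthogonal to all vectors of the form e₀ ⊗ e₀ ⊗ v, one has exactly u = (1/2)·ψ_k · (e₀ ⊗ e₀ ⊗ e_k). In particular, the compression (⟨0| ⊗ ⟨0| ⊗ ⟨0|^{⊗h} ⊗ ⟨0| ⊗ I)·U′·(|0⟩ ⊗ |0⟩ ⊗ |0⟩^{⊗h} ⊗ |0⟩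 ⊗ I) equals (1/2)·diag(ψ₀, …, ψ_{2^h−1}), so U′ is a (2, 2, 0)-block-encoding of diag(ψ) in which the 2h−1 remaining ancilla qubits return to the zero state. -/

import Mathlib

namespace DiagBlockEncoding

open Matrix

/-- The index type of the space `ℂ^{2^h} ⊗ ℂ² ⊗ ℂ^{2^h}`. -/
abbrev Ix (h : ℕ) := Fin (2 ^ h) × Fin 2 × Fin (2 ^ h)

/-- The Hadamard gate `H = (1/√2)[[1,1],[1,−1]]`. -/
noncomputable def Hgate : Matrix (Fin 2) (Fin 2) ℂ :=
  (Real.sqrt 2 : ℂ)⁻¹ • !![1, 1; 1, -1]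

/-- The phase gate `S = diag(1, i)`. -/
def Sgate : Matrix (Fin 2) (Fin 2) ℂ := !![1, 0; 0, Complex.I]

/-- The gate `Z = diag(1, −1)`. -/
def Zgate : Matrix (Fin 2) (Fin 2) ℂ := !![1, 0; 0, -1]

/-- `H̃ = I ⊗ H ⊗ I`. -/
noncomputable def Htil (h : ℕ) : Matrix (Ix h) (Ix h) ℂ :=
  Matrix.of fun x y =>
    if x.1 = y.1 ∧ x.2.2 = y.2.2 then Hgate x.2.1 y.2.1 else 0

/-- `S̃ = I ⊗ S ⊗ I`. -/
def Stil (h : ℕ) : Matrix (Ix h) (Ix h) ℂ :=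
  Matrix.of fun x y =>
    if x.1 = y.1 ∧ x.2.2 = y.2.2 then Sgate x.2.1 y.2.1 else 0

/-- `Z̃ = I ⊗ Z ⊗ I`. -/
def Ztil (h : ℕ) : Matrix (Ix h) (Ix h) ℂ :=
  Matrix.of fun x y =>
    if x.1 = y.1 ∧ x.2.2 = y.2.2 then Zgate x.2.1 y.2.1 else 0

/-- `R = (I − 2·Π₀) ⊗ I`, where `Π₀` projects onto `e₀ ⊗ e₀` of the first two
registers. -/
def Rop (h : ℕ) : Matrix (Ix h) (Ix h) ℂ :=
  Matrix.of fun x y =>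
    if x.2.2 = y.2.2 then
      (if x.1 = y.1 ∧ x.2.1 = y.2.1 then 1 else 0) -
        2 * (if x.1 = 0 ∧ x.2.1 = 0 ∧ y.1 = 0 ∧ y.2.1 = 0 then 1 else 0)
    else 0

/-- `U_C^S = (U_S ⊗ |0⟩⟨0| + I ⊗ |1⟩⟨1|) ⊗ I`: apply `U_S` to the first
register controlled on the middle qubit being `|0⟩`. -/
def UCS (h : ℕ) (U : Matrix (Fin (2 ^ h)) (Fin (2 ^ h)) ℂ) :
    Matrix (Ix h) (Ix h) ℂ :=
  Matrix.of fun x y =>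
    if x.2.2 = y.2.2 then
      (if x.2.1 = 0 ∧ y.2.1 = 0 then U x.1 y.1 else 0) +
        (if x.1 = y.1 ∧ x.2.1 = 1 ∧ y.2.1 = 1 then 1 else 0)
    else 0

/-- `U_Copy`: controlled on the middle qubit being `|1⟩`, XOR the last register
into the first one: `e_j ⊗ e₁ ⊗ e_k ↦ e_{j⊕k} ⊗ e₁ ⊗ e_k`. -/
def UCopy (h : ℕ) : Matrix (Ix h) (Ix h) ℂ :=
  Matrix.of fun x y =>
    if x.2.1 = y.2.1 ∧ x.2.2 = y.2.2 ∧
        (x.1 : ℕ) = (if y.2.1 = 1 then (y.1 : ℕ) ^^^ (y.2.2 : ℕ) else (y.1 : ℕ))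
    then 1 else 0

/-- `W_p = H̃ · S̃^p · U_Copy · U_C^S · H̃`. -/
noncomputable def Wop (h : ℕ) (U : Matrix (Fin (2 ^ h)) (Fin (2 ^ h)) ℂ)
    (p : ℕ) : Matrix (Ix h) (Ix h) ℂ :=
  Htil h * (Stil h) ^ p * UCopy h * UCS h U * Htil h

/-- `G_p = W_p · R · W_p† · Z̃`. -/
noncomputable def Gop (h : ℕ) (U : Matrix (Fin (2 ^ h)) (Fin (2 ^ h)) ℂ)
    (p : ℕ) : Matrix (Ix h) (Ix h) ℂ :=
  Wop h U p * Rop h * (Wop h U p)ᴴ * Ztil h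

/-- The basis vector `e₀ ⊗ e₀ ⊗ e_k` of `ℂ^{2^h} ⊗ ℂ² ⊗ ℂ^{2^h}`. -/
def eVec (h : ℕ) (k : Fin (2 ^ h)) : Ix h → ℂ :=
  fun x => if x = (0, 0, k) then 1 else 0

/-- The gate `X = [[0,1],[1,0]]`. -/
def Xgate : Matrix (Fin 2) (Fin 2) ℂ := !![0, 1; 1, 0]

/-- Tensor product of a one-qubit gate with an operator on
`ℂ^{2^h} ⊗ ℂ² ⊗ ℂ^{2^h}`. -/
def qTens (h : ℕ) (A : Matrix (Fin 2) (Fin 2) ℂ) (B : Matrix (Ix h) (Ix h) ℂ) :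
    Matrix (Fin 2 × Ix h) (Fin 2 × Ix h) ℂ :=
  Matrix.of fun x y => A x.1 y.1 * B x.2 y.2

/-- The controlled choice `|0⟩⟨0| ⊗ A + |1⟩⟨1| ⊗ B`. -/
def ctrlChoice (h : ℕ) (A B : Matrix (Ix h) (Ix h) ℂ) :
    Matrix (Fin 2 × Ix h) (Fin 2 × Ix h) ℂ :=
  Matrix.of fun x y =>
    if x.1 = 0 ∧ y.1 = 0 then A x.2 y.2
    else if x.1 = 1 ∧ y.1 = 1 then B x.2 y.2
    else 0

/-- `U^{(S)}_{(p)} = ((XZX) ⊗ I)·(H ⊗ W_p†)·(|0⟩⟨0| ⊗ G_p + |1⟩⟨1| ⊗ G_p†)·(H ⊗ W_p)`. -/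
noncomputable def USp (h : ℕ) (U : Matrix (Fin (2 ^ h)) (Fin (2 ^ h)) ℂ)
    (p : ℕ) : Matrix (Fin 2 × Ix h) (Fin 2 × Ix h) ℂ :=
  qTens h (Xgate * Zgate * Xgate) 1 * qTens h Hgate (Wop h U p)ᴴ *
    ctrlChoice h (Gop h U p) (Gop h U p)ᴴ * qTens h Hgate (Wop h U p)

/-- Tensor product of a one-qubit gate with an operator on
`ℂ² ⊗ ℂ^{2^h} ⊗ ℂ² ⊗ ℂ^{2^h}`. -/
def qTens' (h : ℕ) (A : Matrix (Fin 2) (Fin 2) ℂ)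
    (B : Matrix (Fin 2 × Ix h) (Fin 2 × Ix h) ℂ) :
    Matrix (Fin 2 × Fin 2 × Ix h) (Fin 2 × Fin 2 × Ix h) ℂ :=
  Matrix.of fun x y => A x.1 y.1 * B x.2 y.2

/-- The controlled choice `|0⟩⟨0| ⊗ A + |1⟩⟨1| ⊗ B` on
`ℂ² ⊗ (ℂ² ⊗ ℂ^{2^h} ⊗ ℂ² ⊗ ℂ^{2^h})`. -/
def ctrlChoice' (h : ℕ) (A B : Matrix (Fin 2 × Ix h) (Fin 2 × Ix h) ℂ) :
    Matrix (Fin 2 × Fin 2 × Ix h) (Fin 2 × Fin 2 × Ix h) ℂ :=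
  Matrix.of fun x y =>
    if x.1 = 0 ∧ y.1 = 0 then A x.2 y.2
    else if x.1 = 1 ∧ y.1 = 1 then B x.2 y.2
    else 0

/-- `U′ = (H ⊗ I)·(|0⟩⟨0| ⊗ U^{(S)}_{(0)} + |1⟩⟨1| ⊗ (i·U^{(S)}_{(1)}))·(H ⊗ I)`. -/
noncomputable def Uprime (h : ℕ) (U : Matrix (Fin (2 ^ h)) (Fin (2 ^ h)) ℂ) :
    Matrix (Fin 2 × Fin 2 × Ix h) (Fin 2 × Fin 2 × Ix h) ℂ :=
  qTens' h Hgate 1 *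
    ctrlChoice' h (USp h U 0) (Complex.I • USp h U 1) *
    qTens' h Hgate 1



/-! ### Auxiliary machinery -/

-- scalar facts
lemma sqrt2_sq : (Real.sqrt 2 : ℂ) * (Real.sqrt 2 : ℂ) = 2 := by
  rw [← Complex.ofReal_mul]
  norm_num

lemma sqrt2_inv_sq : (Real.sqrt 2 : ℂ)⁻¹ * (Real.sqrt 2 : ℂ)⁻¹ = 2⁻¹ := by
  rw [← mul_inv, sqrt2_sq]

lemma star_sqrt2_inv : star ((Real.sqrt 2 : ℂ)⁻¹) = (Real.sqrt 2 : ℂ)⁻¹ := by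
  rw [star_inv₀]
  norm_num [Complex.star_def, Complex.conj_ofReal]

-- unitary predicate
def IsUni {n : Type*} [Fintype n] [DecidableEq n] (A : Matrix n n ℂ) : Prop :=
  A * Aᴴ = 1 ∧ Aᴴ * A = 1

lemma IsUni.mul {n : Type*} [Fintype n] [DecidableEq n] {A B : Matrix n n ℂ}
    (hA : IsUni A) (hB : IsUni B) : IsUni (A * B) := by
  constructor
  · rw [conjTranspose_mul, mul_assoc, ← mul_assoc B, hB.1, one_mul, hA.1]
  · rw [conjTranspose_mul, mul_assoc, ← mul_assoc Aᴴ, hA.2, one_mul, hB.2]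

lemma IsUni.ct {n : Type*} [Fintype n] [DecidableEq n] {A : Matrix n n ℂ}
    (hA : IsUni A) : IsUni Aᴴ := by
  refine ⟨?_, ?_⟩ <;> rw [conjTranspose_conjTranspose]
  exacts [hA.2, hA.1]

lemma IsUni.one {n : Type*} [Fintype n] [DecidableEq n] : IsUni (1 : Matrix n n ℂ) := by
  constructor <;> simp

lemma IsUni.pow {n : Type*} [Fintype n] [DecidableEq n] {A : Matrix n n ℂ}
    (hA : IsUni A) (p : ℕ) : IsUni (A ^ p) := by
  induction p with
  | zero => simpa [pow_zero] using (IsUni.one (n := n))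
  | succ p ih => rw [pow_succ]; exact ih.mul hA

lemma IsUni.smul_I {n : Type*} [Fintype n] [DecidableEq n] {A : Matrix n n ℂ}
    (hA : IsUni A) : IsUni (Complex.I • A) := by
  constructor
  · rw [conjTranspose_smul, smul_mul_assoc, mul_smul_comm, smul_smul, hA.1]
    simp [Complex.star_def]
  · rw [conjTranspose_smul, smul_mul_assoc, mul_smul_comm, smul_smul, hA.2]
    simp [Complex.star_def]

-- gate unitarity
lemma Hgate_uni : IsUni Hgate := by
  have hH : Hgate * Hgate = 1 := by
    ext i j
    fin_cases i <;> fin_cases j <;>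
      simp [Hgate, Matrix.mul_apply, Fin.sum_univ_two, Matrix.one_apply] <;>
      · rw [show ((Real.sqrt 2 : ℂ))⁻¹ * ((Real.sqrt 2 : ℂ))⁻¹ = 2⁻¹ from sqrt2_inv_sq] <;> ring
  have hct : Hgateᴴ = Hgate := by
    ext i j
    fin_cases i <;> fin_cases j <;>
      simp [Hgate, conjTranspose_apply, star_sqrt2_inv, Complex.star_def]
  exact ⟨by rw [hct, hH], by rw [hct, hH]⟩

lemma Sgate_uni : IsUni Sgate := by
  constructor <;>
  · ext i j
    fin_cases i <;> fin_cases j <;>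
      simp [Sgate, Matrix.mul_apply, Fin.sum_univ_two, Matrix.one_apply,
        conjTranspose_apply, Complex.star_def]

lemma Zgate_uni : IsUni Zgate := by
  constructor <;>
  · ext i j
    fin_cases i <;> fin_cases j <;>
      simp [Zgate, Matrix.mul_apply, Fin.sum_univ_two, Matrix.one_apply,
        conjTranspose_apply, Complex.star_def]


-- sum collapse helpers
lemma sum_Ix_mid {h : ℕ} (f : Ix h → ℂ) (j c : Fin (2 ^ h))
    (hf : ∀ x : Ix h, x.1 ≠ j ∨ x.2.2 ≠ c → f x = 0) :
    ∑ x : Ix h, f x = f (j, 0, c) + f (j, 1, c) := by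
  rw [Fintype.sum_prod_type]
  rw [Finset.sum_eq_single j]
  · rw [Fintype.sum_prod_type, Fin.sum_univ_two]
    congr 1 <;>
    · rw [Finset.sum_eq_single c]
      · intro b _ hb; exact hf _ (Or.inr hb)
      · intro hc; exact absurd (Finset.mem_univ c) hc
  · intro b _ hb
    rw [Fintype.sum_prod_type]
    refine Finset.sum_eq_zero fun b' _ => Finset.sum_eq_zero fun c' _ => ?_
    exact hf _ (Or.inl hb)
  · intro hj; exact absurd (Finset.mem_univ j) hj

lemma sum_Ix_fst {h : ℕ} (f : Ix h → ℂ) (b : Fin 2) (c : Fin (2 ^ h))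
    (hf : ∀ x : Ix h, x.2.1 ≠ b ∨ x.2.2 ≠ c → f x = 0) :
    ∑ x : Ix h, f x = ∑ j, f (j, b, c) := by
  rw [Fintype.sum_prod_type]
  refine Finset.sum_congr rfl fun j _ => ?_
  rw [show (∑ w : Fin 2 × Fin (2 ^ h), f (j, w)) = f (j, b, c) from ?_]
  exact Fintype.sum_eq_single (b, c) fun w hw => hf (j, w) (by
    by_cases h1 : w.1 = b
    · exact Or.inr (fun h2 => hw (by rw [← h1, ← h2]))
    · exact Or.inl h1)

lemma sum_Ix_third {h : ℕ} (f : Ix h → ℂ) (c : Fin (2 ^ h))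
    (hf : ∀ x : Ix h, x.2.2 ≠ c → f x = 0) :
    ∑ x : Ix h, f x = ∑ j, (f (j, 0, c) + f (j, 1, c)) := by
  rw [Fintype.sum_prod_type]
  refine Finset.sum_congr rfl fun j _ => ?_
  rw [Fintype.sum_prod_type, Fin.sum_univ_two]
  congr 1 <;>
  · rw [Finset.sum_eq_single c]
    · intro b _ hb; exact hf _ hb
    · intro hc; exact absurd (Finset.mem_univ c) hc

lemma mulVec_ind {n : Type*} [Fintype n] [DecidableEq n] (A : Matrix n n ℂ) (y x : n) :
    A.mulVec (fun z => if z = y then 1 else 0) x = A x y := by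
  simp [Matrix.mulVec, dotProduct, mul_ite]


-- "middle qubit" matrices
def midM (h : ℕ) (A : Matrix (Fin 2) (Fin 2) ℂ) : Matrix (Ix h) (Ix h) ℂ :=
  Matrix.of fun x y => if x.1 = y.1 ∧ x.2.2 = y.2.2 then A x.2.1 y.2.1 else 0

lemma midM_mul_apply {h : ℕ} (A : Matrix (Fin 2) (Fin 2) ℂ) (M : Matrix (Ix h) (Ix h) ℂ)
    (x y : Ix h) :
    (midM h A * M) x y = ∑ b, A x.2.1 b * M (x.1, b, x.2.2) y := by
  rw [Matrix.mul_apply, sum_Ix_mid _ x.1 x.2.2, Fin.sum_univ_two]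
  · simp [midM]
  · rintro ⟨j, b, c⟩ hz
    rcases hz with hz | hz <;> simp [midM] <;> intro e1 e2
    · exact absurd e1.symm hz
    · exact absurd e2.symm hz

lemma mul_midM_apply {h : ℕ} (A : Matrix (Fin 2) (Fin 2) ℂ) (M : Matrix (Ix h) (Ix h) ℂ)
    (x y : Ix h) :
    (M * midM h A) x y = ∑ b, M x (y.1, b, y.2.2) * A b y.2.1 := by
  rw [Matrix.mul_apply, sum_Ix_mid _ y.1 y.2.2, Fin.sum_univ_two]
  · simp [midM]
  · rintro ⟨j, b, c⟩ hz
    have : midM h A (j, b, c) y = 0 := by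
      rcases hz with hz | hz <;> simp [midM] <;> intro e1 e2
      · exact absurd e1 hz
      · exact absurd e2 hz
    rw [this, mul_zero]

lemma midM_mul {h : ℕ} (A B : Matrix (Fin 2) (Fin 2) ℂ) :
    midM h A * midM h B = midM h (A * B) := by
  ext x y
  rw [midM_mul_apply]
  by_cases hc : x.1 = y.1 ∧ x.2.2 = y.2.2
  · simp [midM, hc, Matrix.mul_apply]
  · simp [midM, hc]

lemma midM_ct {h : ℕ} (A : Matrix (Fin 2) (Fin 2) ℂ) : (midM h A)ᴴ = midM h Aᴴ := by
  ext x y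
  by_cases hc : x.1 = y.1 ∧ x.2.2 = y.2.2
  · rw [conjTranspose_apply]
    have hc' : y.1 = x.1 ∧ y.2.2 = x.2.2 := ⟨hc.1.symm, hc.2.symm⟩
    simp only [midM, of_apply, if_pos hc, if_pos hc']
    rfl
  · rw [conjTranspose_apply]
    have hc' : ¬ (y.1 = x.1 ∧ y.2.2 = x.2.2) := by
      intro hh; exact hc ⟨hh.1.symm, hh.2.symm⟩
    simp only [midM, of_apply, if_neg hc, if_neg hc', star_zero]

lemma midM_one {h : ℕ} : midM h 1 = 1 := by
  ext x y
  by_cases h1 : x.1 = y.1 <;> by_cases h2 : x.2.1 = y.2.1 <;> by_cases h3 : x.2.2 = y.2.2 <;>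
    simp [midM, Matrix.one_apply, Prod.ext_iff, h1, h2, h3]

lemma midM_pow {h : ℕ} (A : Matrix (Fin 2) (Fin 2) ℂ) (p : ℕ) :
    (midM h A) ^ p = midM h (A ^ p) := by
  induction p with
  | zero => simp [midM_one]
  | succ p ih => rw [pow_succ, pow_succ, ih, midM_mul]


-- sidM
def sidM (h : ℕ) (c : Fin 2) (A : Matrix (Fin (2 ^ h)) (Fin (2 ^ h)) ℂ) :
    Matrix (Ix h) (Ix h) ℂ :=
  Matrix.of fun x y => if x.2.1 = c ∧ y.2.1 = c ∧ x.2.2 = y.2.2 then A x.1 y.1 else 0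

lemma UCS_eq {h : ℕ} (U : Matrix (Fin (2 ^ h)) (Fin (2 ^ h)) ℂ) :
    UCS h U = sidM h 0 U + sidM h 1 1 := by
  ext ⟨j, b, c⟩ ⟨j', b', c'⟩
  fin_cases b <;> fin_cases b' <;> by_cases hc : c = c' <;>
    simp [UCS, sidM, hc, Matrix.one_apply]

lemma sidM_mul_same {h : ℕ} (c : Fin 2) (A B : Matrix (Fin (2 ^ h)) (Fin (2 ^ h)) ℂ) :
    sidM h c A * sidM h c B = sidM h c (A * B) := by
  ext x y
  rw [Matrix.mul_apply]
  by_cases hx : x.2.1 = c ∧ y.2.1 = c ∧ x.2.2 = y.2.2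
  · rw [sum_Ix_fst _ c y.2.2]
    · simp only [sidM, of_apply, if_pos hx, Matrix.mul_apply]
      refine Finset.sum_congr rfl fun j _ => ?_
      simp [hx.1, hx.2.1, hx.2.2]
    · rintro ⟨j, b, cc⟩ hz
      rcases hz with hz | hz
      · have : sidM h c A x (j, b, cc) = 0 := by
          simp only [sidM, of_apply]; rw [if_neg]; rintro ⟨-, e2, -⟩; exact hz e2
        rw [this, zero_mul]
      · have : sidM h c B (j, b, cc) y = 0 := by
          simp only [sidM, of_apply]; rw [if_neg]; rintro ⟨-, -, e3⟩; exact hz e3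
        rw [this, mul_zero]
  · have hr : sidM h c (A * B) x y = 0 := by
      simp only [sidM, of_apply]; exact if_neg hx
    rw [hr]
    refine Finset.sum_eq_zero fun z _ => ?_
    by_cases h1 : x.2.1 = c
    · by_cases h2 : y.2.1 = c
      · -- then x.2.2 ≠ y.2.2
        have h3 : x.2.2 ≠ y.2.2 := fun e => hx ⟨h1, h2, e⟩
        by_cases h4 : x.2.2 = z.2.2
        · have : sidM h c B z y = 0 := by
            simp only [sidM, of_apply]; rw [if_neg]; rintro ⟨-, -, e3⟩
            exact h3 (h4.trans e3)
          rw [this, mul_zero]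
        · have : sidM h c A x z = 0 := by
            simp only [sidM, of_apply]; rw [if_neg]; rintro ⟨-, -, e3⟩; exact h4 e3
          rw [this, zero_mul]
      · have : sidM h c B z y = 0 := by
          simp only [sidM, of_apply]; rw [if_neg]; rintro ⟨-, e2, -⟩; exact h2 e2
        rw [this, mul_zero]
    · have : sidM h c A x z = 0 := by
        simp only [sidM, of_apply]; rw [if_neg]; rintro ⟨e1, -, -⟩; exact h1 e1
      rw [this, zero_mul]

lemma sidM_mul_ne {h : ℕ} {c c' : Fin 2} (hcc : c ≠ c')
    (A B : Matrix (Fin (2 ^ h)) (Fin (2 ^ h)) ℂ) :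
    sidM h c A * sidM h c' B = 0 := by
  ext x y
  rw [Matrix.mul_apply]
  refine Finset.sum_eq_zero fun z _ => ?_
  by_cases h1 : z.2.1 = c
  · have : sidM h c' B z y = 0 := by
      simp only [sidM, of_apply]; rw [if_neg]; rintro ⟨e1, -, -⟩; exact hcc (h1 ▸ e1 ▸ rfl)
    rw [this, mul_zero]
  · have : sidM h c A x z = 0 := by
      simp only [sidM, of_apply]; rw [if_neg]; rintro ⟨-, e2, -⟩; exact h1 e2
    rw [this, zero_mul]

lemma sidM_ct {h : ℕ} (c : Fin 2) (A : Matrix (Fin (2 ^ h)) (Fin (2 ^ h)) ℂ) :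
    (sidM h c A)ᴴ = sidM h c Aᴴ := by
  ext x y
  rw [conjTranspose_apply]
  by_cases hc : x.2.1 = c ∧ y.2.1 = c ∧ x.2.2 = y.2.2
  · have hc' : y.2.1 = c ∧ x.2.1 = c ∧ y.2.2 = x.2.2 := ⟨hc.2.1, hc.1, hc.2.2.symm⟩
    simp only [sidM, of_apply, if_pos hc, if_pos hc']
    rfl
  · have hc' : ¬ (y.2.1 = c ∧ x.2.1 = c ∧ y.2.2 = x.2.2) := by
      rintro ⟨e1, e2, e3⟩; exact hc ⟨e2, e1, e3.symm⟩
    simp only [sidM, of_apply, if_neg hc, if_neg hc', star_zero]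

lemma sidM_add_one {h : ℕ} : sidM h 0 1 + sidM h 1 1 = (1 : Matrix (Ix h) (Ix h) ℂ) := by
  ext ⟨j, b, c⟩ ⟨j', b', c'⟩
  fin_cases b <;> fin_cases b' <;> by_cases hc : c = c' <;> by_cases hj : j = j' <;>
    simp [sidM, Matrix.one_apply, Prod.ext_iff, hc, hj]


-- tau
def tau (h : ℕ) (x : Ix h) : Ix h :=
  (if x.2.1 = 1 then ⟨(x.1 : ℕ) ^^^ (x.2.2 : ℕ), Nat.xor_lt_two_pow x.1.isLt x.2.2.isLt⟩
   else x.1, x.2.1, x.2.2)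

lemma tau_tau {h : ℕ} (x : Ix h) : tau h (tau h x) = x := by
  rcases x with ⟨j, b, c⟩
  fin_cases b <;> simp [tau, Fin.ext_iff, xor_cancel_right]

lemma UCopy_apply {h : ℕ} (x y : Ix h) :
    UCopy h x y = if x = tau h y then 1 else 0 := by
  rcases x with ⟨j, b, c⟩; rcases y with ⟨j', b', c'⟩
  have hiff : (b = b' ∧ c = c' ∧
      (j : ℕ) = (if b' = 1 then (j' : ℕ) ^^^ (c' : ℕ) else (j' : ℕ))) ↔
      ((j, b, c) : Ix h) = tau h (j', b', c') := by
    constructor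
    · rintro ⟨e1, e2, e3⟩
      subst e1; subst e2
      have hv : j = (tau h (j', b, c)).1 := by
        apply Fin.ext
        rw [e3]
        by_cases hb : b = 1 <;> simp [tau, hb]
      exact Prod.ext_iff.mpr ⟨hv, rfl⟩
    · intro e
      obtain ⟨e1, e2, e3⟩ : j = (tau h (j', b', c')).1 ∧ b = b' ∧ c = c' := by
        have e' := Prod.ext_iff.mp e
        exact ⟨e'.1, Prod.ext_iff.mp e'.2⟩
      subst e2; subst e3
      refine ⟨rfl, rfl, ?_⟩
      rw [show (j : ℕ) = ((tau h (j', b, c)).1 : ℕ) from congrArg Fin.val e1]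
      by_cases hb : b = 1 <;> simp [tau, hb]
  simp only [UCopy, of_apply]
  exact if_congr hiff rfl rfl

lemma UCopy_apply' {h : ℕ} (x y : Ix h) :
    UCopy h x y = if y = tau h x then 1 else 0 := by
  rw [UCopy_apply]
  congr 1
  simp only [eq_iff_iff]
  constructor
  · intro e; rw [e, tau_tau]
  · intro e; rw [e, tau_tau]

lemma UCopy_ct {h : ℕ} : (UCopy h)ᴴ = UCopy h := by
  ext x y
  rw [conjTranspose_apply, UCopy_apply' y x, UCopy_apply x y]
  by_cases e : x = tau h y <;> simp [e]

lemma UCopy_mul_apply {h : ℕ} (N : Matrix (Ix h) (Ix h) ℂ) (x y : Ix h) :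
    (UCopy h * N) x y = N (tau h x) y := by
  rw [Matrix.mul_apply]
  have : ∀ z, UCopy h x z * N z y = if z = tau h x then N z y else 0 := by
    intro z; rw [UCopy_apply']; by_cases e : z = tau h x <;> simp [e]
  simp_rw [this]
  simp

lemma UCopy_mul_self {h : ℕ} : UCopy h * UCopy h = 1 := by
  ext x y
  rw [UCopy_mul_apply, UCopy_apply', tau_tau, Matrix.one_apply]
  by_cases e : x = y
  · simp [e]
  · rw [if_neg (fun e' => e e'.symm), if_neg e]

-- Pi0 / Rop
def Pi0 (h : ℕ) : Matrix (Ix h) (Ix h) ℂ :=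
  Matrix.of fun x y =>
    if x.1 = 0 ∧ x.2.1 = 0 ∧ y.1 = 0 ∧ y.2.1 = 0 ∧ x.2.2 = y.2.2 then 1 else 0

lemma Rop_eq {h : ℕ} : Rop h = 1 - (2 : ℂ) • Pi0 h := by
  ext x y
  simp only [Rop, Pi0, of_apply, Matrix.sub_apply, Matrix.smul_apply, smul_eq_mul]
  by_cases hc : x.2.2 = y.2.2
  · rw [if_pos hc]
    congr 1
    · rw [Matrix.one_apply]
      refine if_congr ?_ rfl rfl
      constructor
      · rintro ⟨e1, e2⟩
        exact Prod.ext_iff.mpr ⟨e1, Prod.ext_iff.mpr ⟨e2, hc⟩⟩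
      · rintro rfl; exact ⟨rfl, rfl⟩
    · congr 1
      refine if_congr ?_ rfl rfl
      constructor
      · rintro ⟨e1, e2, e3, e4⟩; exact ⟨e1, e2, e3, e4, hc⟩
      · rintro ⟨e1, e2, e3, e4, -⟩; exact ⟨e1, e2, e3, e4⟩
  · rw [if_neg hc, Matrix.one_apply,
      if_neg (show ¬ x = y from fun e => hc (congrArg (fun t : Ix h => t.2.2) e)),
      if_neg (show ¬(x.1 = 0 ∧ x.2.1 = 0 ∧ y.1 = 0 ∧ y.2.1 = 0 ∧ x.2.2 = y.2.2) from
        fun e => hc e.2.2.2.2), mul_zero, sub_zero]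


-- Pi0 lemmas
lemma Pi0_ct {h : ℕ} : (Pi0 h)ᴴ = Pi0 h := by
  ext x y
  rw [conjTranspose_apply]
  by_cases hc : x.1 = 0 ∧ x.2.1 = 0 ∧ y.1 = 0 ∧ y.2.1 = 0 ∧ x.2.2 = y.2.2
  · have hc' : y.1 = 0 ∧ y.2.1 = 0 ∧ x.1 = 0 ∧ x.2.1 = 0 ∧ y.2.2 = x.2.2 :=
      ⟨hc.2.2.1, hc.2.2.2.1, hc.1, hc.2.1, hc.2.2.2.2.symm⟩
    simp only [Pi0, of_apply, if_pos hc, if_pos hc']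
    exact star_one ℂ
  · have hc' : ¬(y.1 = 0 ∧ y.2.1 = 0 ∧ x.1 = 0 ∧ x.2.1 = 0 ∧ y.2.2 = x.2.2) := by
      rintro ⟨e1, e2, e3, e4, e5⟩; exact hc ⟨e3, e4, e1, e2, e5.symm⟩
    simp only [Pi0, of_apply, if_neg hc, if_neg hc']
    exact star_zero ℂ

lemma Pi0_mul_Pi0 {h : ℕ} : Pi0 h * Pi0 h = Pi0 h := by
  ext x y
  rw [Matrix.mul_apply]
  by_cases hx : x.1 = 0 ∧ x.2.1 = 0
  · rw [Fintype.sum_eq_single ((0, 0, x.2.2) : Ix h)]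
    · by_cases hy : y.1 = 0 ∧ y.2.1 = 0 ∧ x.2.2 = y.2.2
      · have e1 : Pi0 h x (0, 0, x.2.2) = 1 := by simp [Pi0, hx.1, hx.2]
        have e2 : Pi0 h (0, 0, x.2.2) y = 1 := by simp [Pi0, hy.1, hy.2.1, hy.2.2]
        have e3 : Pi0 h x y = 1 := by simp [Pi0, hx.1, hx.2, hy.1, hy.2.1, hy.2.2]
        rw [e1, e2, e3, one_mul]
      · have e2 : Pi0 h (0, 0, x.2.2) y = 0 := by
          simp only [Pi0, of_apply]; rw [if_neg]; rintro ⟨-, -, e1, e2, e3⟩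
          exact hy ⟨e1, e2, e3⟩
        have e3 : Pi0 h x y = 0 := by
          simp only [Pi0, of_apply]; rw [if_neg]; rintro ⟨-, -, e1, e2, e3⟩
          exact hy ⟨e1, e2, e3⟩
        rw [e2, e3, mul_zero]
    · intro z hz
      have : Pi0 h x z = 0 := by
        simp only [Pi0, of_apply]; rw [if_neg]; rintro ⟨-, -, e1, e2, e3⟩
        exact hz (by rw [Prod.ext_iff, Prod.ext_iff]; exact ⟨e1, e2, e3.symm⟩)
      rw [this, zero_mul]
  · have e0 : Pi0 h x y = 0 := by
      simp only [Pi0, of_apply]; rw [if_neg]; rintro ⟨e1, e2, -⟩; exact hx ⟨e1, e2⟩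
    rw [e0]
    refine Finset.sum_eq_zero fun z _ => ?_
    have : Pi0 h x z = 0 := by
      simp only [Pi0, of_apply]; rw [if_neg]; rintro ⟨e1, e2, -⟩; exact hx ⟨e1, e2⟩
    rw [this, zero_mul]


section generic
variable {α : Type*} [Fintype α] [DecidableEq α]

-- generic versions, stated for a general second factor α
lemma qT_mul (A A' : Matrix (Fin 2) (Fin 2) ℂ) (B B' : Matrix α α ℂ) :
    (Matrix.of fun (x y : Fin 2 × α) => A x.1 y.1 * B x.2 y.2) *
      (Matrix.of fun (x y : Fin 2 × α) => A' x.1 y.1 * B' x.2 y.2) =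
      (Matrix.of fun (x y : Fin 2 × α) => (A * A') x.1 y.1 * (B * B') x.2 y.2) := by
  ext x y
  simp only [Matrix.mul_apply, of_apply, Fintype.sum_prod_type]
  rw [Finset.sum_mul_sum]
  refine Finset.sum_congr rfl fun u _ => Finset.sum_congr rfl fun z _ => ?_
  ring

lemma qT_ct (A : Matrix (Fin 2) (Fin 2) ℂ) (B : Matrix α α ℂ) :
    (Matrix.of fun (x y : Fin 2 × α) => A x.1 y.1 * B x.2 y.2)ᴴ =
      (Matrix.of fun (x y : Fin 2 × α) => Aᴴ x.1 y.1 * Bᴴ x.2 y.2) := by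
  ext x y
  simp only [conjTranspose_apply, of_apply, star_mul']

lemma qT_one : (Matrix.of fun (x y : Fin 2 × α) =>
    (1 : Matrix (Fin 2) (Fin 2) ℂ) x.1 y.1 * (1 : Matrix α α ℂ) x.2 y.2) = 1 := by
  ext x y
  by_cases h1 : x.1 = y.1 <;> by_cases h2 : x.2 = y.2 <;>
    simp [Matrix.one_apply, Prod.ext_iff, h1, h2]

lemma ctrl_mul (A B C D : Matrix α α ℂ) :
    (Matrix.of fun (x y : Fin 2 × α) =>
      if x.1 = 0 ∧ y.1 = 0 then A x.2 y.2 else if x.1 = 1 ∧ y.1 = 1 then B x.2 y.2 else 0) *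
    (Matrix.of fun (x y : Fin 2 × α) =>
      if x.1 = 0 ∧ y.1 = 0 then C x.2 y.2 else if x.1 = 1 ∧ y.1 = 1 then D x.2 y.2 else 0) =
    (Matrix.of fun (x y : Fin 2 × α) =>
      if x.1 = 0 ∧ y.1 = 0 then (A * C) x.2 y.2
      else if x.1 = 1 ∧ y.1 = 1 then (B * D) x.2 y.2 else 0) := by
  ext ⟨a, x⟩ ⟨b, y⟩
  simp only [Matrix.mul_apply, of_apply, Fintype.sum_prod_type, Fin.sum_univ_two]
  fin_cases a <;> fin_cases b <;> simp [Matrix.mul_apply]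

lemma ctrl_ct (A B : Matrix α α ℂ) :
    (Matrix.of fun (x y : Fin 2 × α) =>
      if x.1 = 0 ∧ y.1 = 0 then A x.2 y.2 else if x.1 = 1 ∧ y.1 = 1 then B x.2 y.2 else 0)ᴴ =
    (Matrix.of fun (x y : Fin 2 × α) =>
      if x.1 = 0 ∧ y.1 = 0 then Aᴴ x.2 y.2 else if x.1 = 1 ∧ y.1 = 1 then Bᴴ x.2 y.2 else 0) := by
  ext ⟨a, x⟩ ⟨b, y⟩
  fin_cases a <;> fin_cases b <;> simp [conjTranspose_apply]

lemma ctrl_one : (Matrix.of fun (x y : Fin 2 × α) =>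
      if x.1 = 0 ∧ y.1 = 0 then (1 : Matrix α α ℂ) x.2 y.2
      else if x.1 = 1 ∧ y.1 = 1 then (1 : Matrix α α ℂ) x.2 y.2 else 0) = 1 := by
  ext ⟨a, x⟩ ⟨b, y⟩
  fin_cases a <;> fin_cases b <;> by_cases h2 : x = y <;>
    simp [Matrix.one_apply, Prod.ext_iff, h2]

end generic

section blocks
variable {α : Type*} [Fintype α] [DecidableEq α]

lemma ctrl_mul_qT0 (P Q : Matrix α α ℂ) (A' : Matrix (Fin 2) (Fin 2) ℂ) (B' : Matrix α α ℂ)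
    (u : α) (y : α) :
    ((Matrix.of fun (x y : Fin 2 × α) =>
        if x.1 = 0 ∧ y.1 = 0 then P x.2 y.2 else if x.1 = 1 ∧ y.1 = 1 then Q x.2 y.2 else 0) *
     (Matrix.of fun (x y : Fin 2 × α) => A' x.1 y.1 * B' x.2 y.2)) ((0 : Fin 2), u) ((0 : Fin 2), y)
    = A' 0 0 * (P * B') u y := by
  simp only [Matrix.mul_apply, of_apply, Fintype.sum_prod_type, Fin.sum_univ_two]
  simp
  rw [Finset.mul_sum]
  refine Finset.sum_congr rfl fun z _ => ?_
  ring

lemma ctrl_mul_qT1 (P Q : Matrix α α ℂ) (A' : Matrix (Fin 2) (Fin 2) ℂ) (B' : Matrix α α ℂ)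
    (u : α) (y : α) :
    ((Matrix.of fun (x y : Fin 2 × α) =>
        if x.1 = 0 ∧ y.1 = 0 then P x.2 y.2 else if x.1 = 1 ∧ y.1 = 1 then Q x.2 y.2 else 0) *
     (Matrix.of fun (x y : Fin 2 × α) => A' x.1 y.1 * B' x.2 y.2)) ((1 : Fin 2), u) ((0 : Fin 2), y)
    = A' 1 0 * (Q * B') u y := by
  simp only [Matrix.mul_apply, of_apply, Fintype.sum_prod_type, Fin.sum_univ_two]
  simp
  rw [Finset.mul_sum]
  refine Finset.sum_congr rfl fun z _ => ?_
  ring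

lemma sandwich (A A' : Matrix (Fin 2) (Fin 2) ℂ) (B B' P Q : Matrix α α ℂ) (x y : α) :
    ((Matrix.of fun (x y : Fin 2 × α) => A x.1 y.1 * B x.2 y.2) *
     ((Matrix.of fun (x y : Fin 2 × α) =>
        if x.1 = 0 ∧ y.1 = 0 then P x.2 y.2 else if x.1 = 1 ∧ y.1 = 1 then Q x.2 y.2 else 0) *
      (Matrix.of fun (x y : Fin 2 × α) => A' x.1 y.1 * B' x.2 y.2))) ((0 : Fin 2), x) ((0 : Fin 2), y)
    = A 0 0 * A' 0 0 * (B * (P * B')) x y + A 0 1 * A' 1 0 * (B * (Q * B')) x y := by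
  rw [Matrix.mul_apply]
  rw [Fintype.sum_prod_type, Fin.sum_univ_two]
  have e0 : ∀ u : α, (Matrix.of fun (x y : Fin 2 × α) => A x.1 y.1 * B x.2 y.2)
      ((0 : Fin 2), x) ((0 : Fin 2), u) = A 0 0 * B x u := fun u => rfl
  have e1 : ∀ u : α, (Matrix.of fun (x y : Fin 2 × α) => A x.1 y.1 * B x.2 y.2)
      ((0 : Fin 2), x) ((1 : Fin 2), u) = A 0 1 * B x u := fun u => rfl
  simp only [e0, e1, ctrl_mul_qT0, ctrl_mul_qT1]
  congr 1
  · rw [Matrix.mul_apply, Finset.mul_sum]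
    refine Finset.sum_congr rfl fun u _ => ?_
    ring
  · rw [Matrix.mul_apply, Finset.mul_sum]
    refine Finset.sum_congr rfl fun u _ => ?_
    ring

end blocks

section blocks2
variable {α : Type*} [Fintype α] [DecidableEq α]

lemma qT_left (D : Matrix (Fin 2) (Fin 2) ℂ) (N : Matrix (Fin 2 × α) (Fin 2 × α) ℂ)
    (x : α) (y : Fin 2 × α) :
    ((Matrix.of fun (x y : Fin 2 × α) => D x.1 y.1 * (1 : Matrix α α ℂ) x.2 y.2) * N)
      ((0 : Fin 2), x) y = D 0 0 * N (0, x) y + D 0 1 * N (1, x) y := by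
  rw [Matrix.mul_apply, Fintype.sum_prod_type, Fin.sum_univ_two]
  simp only [of_apply, Matrix.one_apply, mul_ite, mul_one, mul_zero, ite_mul, zero_mul,
    Finset.sum_ite_eq, Finset.mem_univ, if_true]

end blocks2



/-! ### Unitarity of the components -/

lemma Xgate_uni : IsUni Xgate := by
  constructor <;>
  · ext i j
    fin_cases i <;> fin_cases j <;>
      simp [Xgate, Matrix.mul_apply, Fin.sum_univ_two, Matrix.one_apply,
        conjTranspose_apply, Complex.star_def]

lemma Htil_eq (h : ℕ) : Htil h = midM h Hgate := rfl
lemma Stil_eq (h : ℕ) : Stil h = midM h Sgate := rfl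
lemma Ztil_eq (h : ℕ) : Ztil h = midM h Zgate := rfl

lemma midM_uni {h : ℕ} {A : Matrix (Fin 2) (Fin 2) ℂ} (hA : IsUni A) : IsUni (midM h A) := by
  constructor
  · rw [midM_ct, midM_mul, hA.1, midM_one]
  · rw [midM_ct, midM_mul, hA.2, midM_one]

lemma Htil_uni (h : ℕ) : IsUni (Htil h) := Htil_eq h ▸ midM_uni Hgate_uni
lemma Stil_uni (h : ℕ) : IsUni (Stil h) := Stil_eq h ▸ midM_uni Sgate_uni
lemma Ztil_uni (h : ℕ) : IsUni (Ztil h) := Ztil_eq h ▸ midM_uni Zgate_uni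

lemma UCopy_uni (h : ℕ) : IsUni (UCopy h) := by
  constructor <;> rw [UCopy_ct] <;> exact UCopy_mul_self

lemma UCS_uni (h : ℕ) {U : Matrix (Fin (2 ^ h)) (Fin (2 ^ h)) ℂ}
    (hU₁ : U * Uᴴ = 1) (hU₂ : Uᴴ * U = 1) : IsUni (UCS h U) := by
  have hct : (UCS h U)ᴴ = sidM h 0 Uᴴ + sidM h 1 1 := by
    rw [UCS_eq, conjTranspose_add, sidM_ct, sidM_ct, conjTranspose_one]
  constructor
  · rw [hct, UCS_eq, add_mul, mul_add, mul_add,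
      sidM_mul_same, sidM_mul_ne (by decide) U 1, sidM_mul_ne (by decide) (1 : Matrix _ _ ℂ) Uᴴ,
      sidM_mul_same, hU₁, one_mul, add_zero, zero_add, sidM_add_one]
  · rw [hct, UCS_eq, add_mul, mul_add, mul_add,
      sidM_mul_same, sidM_mul_ne (by decide) Uᴴ 1, sidM_mul_ne (by decide) (1 : Matrix _ _ ℂ) U,
      sidM_mul_same, hU₂, one_mul, add_zero, zero_add, sidM_add_one]

lemma Rop_uni (h : ℕ) : IsUni (Rop h) := by
  have hct : (Rop h)ᴴ = Rop h := by
    rw [Rop_eq, conjTranspose_sub, conjTranspose_smul, conjTranspose_one, Pi0_ct]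
    norm_num [Complex.star_def]
  have hsq : Rop h * Rop h = 1 := by
    rw [Rop_eq, mul_sub, mul_one, mul_smul_comm, sub_mul, one_mul, smul_mul_assoc,
      Pi0_mul_Pi0, smul_sub, smul_smul]
    rw [show (2 : ℂ) * 2 = 2 + 2 from by norm_num, add_smul]
    abel
  exact ⟨by rw [hct]; exact hsq, by rw [hct]; exact hsq⟩

lemma qTens_mul {h : ℕ} (A A' : Matrix (Fin 2) (Fin 2) ℂ) (B B' : Matrix (Ix h) (Ix h) ℂ) :
    qTens h A B * qTens h A' B' = qTens h (A * A') (B * B') := qT_mul A A' B B'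

lemma qTens_ct {h : ℕ} (A : Matrix (Fin 2) (Fin 2) ℂ) (B : Matrix (Ix h) (Ix h) ℂ) :
    (qTens h A B)ᴴ = qTens h Aᴴ Bᴴ := qT_ct A B

lemma qTens_one {h : ℕ} : qTens h 1 1 = 1 := qT_one

lemma qTens_uni {h : ℕ} {A : Matrix (Fin 2) (Fin 2) ℂ} {B : Matrix (Ix h) (Ix h) ℂ}
    (hA : IsUni A) (hB : IsUni B) : IsUni (qTens h A B) := by
  constructor
  · rw [qTens_ct, qTens_mul, hA.1, hB.1, qTens_one]
  · rw [qTens_ct, qTens_mul, hA.2, hB.2, qTens_one]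

lemma ctrlChoice_mul {h : ℕ} (A B C D : Matrix (Ix h) (Ix h) ℂ) :
    ctrlChoice h A B * ctrlChoice h C D = ctrlChoice h (A * C) (B * D) := ctrl_mul A B C D

lemma ctrlChoice_ct {h : ℕ} (A B : Matrix (Ix h) (Ix h) ℂ) :
    (ctrlChoice h A B)ᴴ = ctrlChoice h Aᴴ Bᴴ := ctrl_ct A B

lemma ctrlChoice_one {h : ℕ} : ctrlChoice h 1 1 = 1 := ctrl_one

lemma ctrlChoice_uni {h : ℕ} {A B : Matrix (Ix h) (Ix h) ℂ}
    (hA : IsUni A) (hB : IsUni B) : IsUni (ctrlChoice h A B) := by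
  constructor
  · rw [ctrlChoice_ct, ctrlChoice_mul, hA.1, hB.1, ctrlChoice_one]
  · rw [ctrlChoice_ct, ctrlChoice_mul, hA.2, hB.2, ctrlChoice_one]

lemma qTens'_mul {h : ℕ} (A A' : Matrix (Fin 2) (Fin 2) ℂ)
    (B B' : Matrix (Fin 2 × Ix h) (Fin 2 × Ix h) ℂ) :
    qTens' h A B * qTens' h A' B' = qTens' h (A * A') (B * B') := qT_mul A A' B B'

lemma qTens'_ct {h : ℕ} (A : Matrix (Fin 2) (Fin 2) ℂ)
    (B : Matrix (Fin 2 × Ix h) (Fin 2 × Ix h) ℂ) :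
    (qTens' h A B)ᴴ = qTens' h Aᴴ Bᴴ := qT_ct A B

lemma qTens'_one {h : ℕ} : qTens' h 1 1 = 1 := qT_one

lemma qTens'_uni {h : ℕ} {A : Matrix (Fin 2) (Fin 2) ℂ}
    {B : Matrix (Fin 2 × Ix h) (Fin 2 × Ix h) ℂ}
    (hA : IsUni A) (hB : IsUni B) : IsUni (qTens' h A B) := by
  constructor
  · rw [qTens'_ct, qTens'_mul, hA.1, hB.1, qTens'_one]
  · rw [qTens'_ct, qTens'_mul, hA.2, hB.2, qTens'_one]

lemma ctrlChoice'_mul {h : ℕ} (A B C D : Matrix (Fin 2 × Ix h) (Fin 2 × Ix h) ℂ) :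
    ctrlChoice' h A B * ctrlChoice' h C D = ctrlChoice' h (A * C) (B * D) := ctrl_mul A B C D

lemma ctrlChoice'_ct {h : ℕ} (A B : Matrix (Fin 2 × Ix h) (Fin 2 × Ix h) ℂ) :
    (ctrlChoice' h A B)ᴴ = ctrlChoice' h Aᴴ Bᴴ := ctrl_ct A B

lemma ctrlChoice'_one {h : ℕ} : ctrlChoice' h 1 1 = 1 := ctrl_one

lemma ctrlChoice'_uni {h : ℕ} {A B : Matrix (Fin 2 × Ix h) (Fin 2 × Ix h) ℂ}
    (hA : IsUni A) (hB : IsUni B) : IsUni (ctrlChoice' h A B) := by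
  constructor
  · rw [ctrlChoice'_ct, ctrlChoice'_mul, hA.1, hB.1, ctrlChoice'_one]
  · rw [ctrlChoice'_ct, ctrlChoice'_mul, hA.2, hB.2, ctrlChoice'_one]

lemma Wop_uni (h : ℕ) {U : Matrix (Fin (2 ^ h)) (Fin (2 ^ h)) ℂ}
    (hU₁ : U * Uᴴ = 1) (hU₂ : Uᴴ * U = 1) (p : ℕ) : IsUni (Wop h U p) :=
  ((((Htil_uni h).mul ((Stil_uni h).pow p)).mul (UCopy_uni h)).mul
    (UCS_uni h hU₁ hU₂)).mul (Htil_uni h)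

lemma Gop_uni (h : ℕ) {U : Matrix (Fin (2 ^ h)) (Fin (2 ^ h)) ℂ}
    (hU₁ : U * Uᴴ = 1) (hU₂ : Uᴴ * U = 1) (p : ℕ) : IsUni (Gop h U p) :=
  (((Wop_uni h hU₁ hU₂ p).mul (Rop_uni h)).mul (Wop_uni h hU₁ hU₂ p).ct).mul (Ztil_uni h)

lemma USp_uni (h : ℕ) {U : Matrix (Fin (2 ^ h)) (Fin (2 ^ h)) ℂ}
    (hU₁ : U * Uᴴ = 1) (hU₂ : Uᴴ * U = 1) (p : ℕ) : IsUni (USp h U p) :=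
  (((qTens_uni ((Xgate_uni.mul Zgate_uni).mul Xgate_uni) IsUni.one).mul
    (qTens_uni Hgate_uni (Wop_uni h hU₁ hU₂ p).ct)).mul
    (ctrlChoice_uni (Gop_uni h hU₁ hU₂ p) (Gop_uni h hU₁ hU₂ p).ct)).mul
    (qTens_uni Hgate_uni (Wop_uni h hU₁ hU₂ p))

lemma Uprime_uni (h : ℕ) {U : Matrix (Fin (2 ^ h)) (Fin (2 ^ h)) ℂ}
    (hU₁ : U * Uᴴ = 1) (hU₂ : Uᴴ * U = 1) : IsUni (Uprime h U) :=
  ((qTens'_uni Hgate_uni IsUni.one).mul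
    (ctrlChoice'_uni (USp_uni h hU₁ hU₂ 0) ((USp_uni h hU₁ hU₂ 1).smul_I))).mul
    (qTens'_uni Hgate_uni IsUni.one)


/-! ### Column computations -/

def zeta (b : Fin 2) : ℂ := if b = 0 then 1 else -1

lemma Sgate_pow (p : ℕ) : Sgate ^ p = !![1, 0; 0, Complex.I ^ p] := by
  induction p with
  | zero => rw [pow_zero, pow_zero, Matrix.one_fin_two]
  | succ p ih =>
      rw [pow_succ, ih, Sgate, Matrix.mul_fin_two, pow_succ]
      norm_num

lemma Htil_col (h : ℕ) (k : Fin (2 ^ h)) (x : Ix h) :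
    Htil h x (0, 0, k) =
      if x.1 = 0 ∧ x.2.2 = k then (Real.sqrt 2 : ℂ)⁻¹ else 0 := by
  rcases x with ⟨j, b, c⟩
  by_cases h1 : j = 0 <;> by_cases h2 : c = k <;>
    fin_cases b <;> simp [Htil, Hgate, h1, h2]

lemma UCS_Htil_col (h : ℕ) (U : Matrix (Fin (2 ^ h)) (Fin (2 ^ h)) ℂ)
    (k : Fin (2 ^ h)) (x : Ix h) :
    (UCS h U * Htil h) x (0, 0, k) =
      if x.2.2 = k then (Real.sqrt 2 : ℂ)⁻¹ *
        (if x.2.1 = 0 then U x.1 0 else if x.1 = 0 then 1 else 0) else 0 := by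
  rw [Matrix.mul_apply, sum_Ix_mid _ 0 k]
  · rcases x with ⟨j, b, c⟩
    fin_cases b <;> by_cases hc : c = k <;> by_cases hj : j = 0 <;>
      simp [UCS, Htil, Hgate, hc, hj] <;> ring
  · rintro ⟨j, b, c⟩ hz
    have e : Htil h (j, b, c) (0, 0, k) = 0 := by
      simp only [Htil, of_apply]; rw [if_neg]; rintro ⟨e1, e2⟩
      rcases hz with hz | hz
      exacts [hz e1, hz e2]
    rw [e, mul_zero]

lemma UCopy_col (h : ℕ) (U : Matrix (Fin (2 ^ h)) (Fin (2 ^ h)) ℂ)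
    (k : Fin (2 ^ h)) (x : Ix h) :
    (UCopy h * (UCS h U * Htil h)) x (0, 0, k) =
      if x.2.2 = k then (Real.sqrt 2 : ℂ)⁻¹ *
        (if x.2.1 = 0 then U x.1 0 else if x.1 = k then 1 else 0) else 0 := by
  rw [UCopy_mul_apply, UCS_Htil_col]
  rcases x with ⟨j, b, c⟩
  by_cases hb : b = 0
  · subst hb; simp [tau]
  · have hb1 : b = 1 := by
      apply Fin.ext
      have h2 := b.isLt
      have h0 : (b : ℕ) ≠ 0 := fun e => hb (Fin.ext (by simpa using e))
      omega
    subst hb1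
    rw [show tau h (j, 1, c) =
        ((⟨(j : ℕ) ^^^ (c : ℕ), Nat.xor_lt_two_pow j.isLt c.isLt⟩ : Fin (2 ^ h)), 1, c) from
      by simp [tau]]
    by_cases hc : c = k
    · subst hc
      rw [if_pos rfl, if_pos rfl]
      congr 1
      rw [if_neg (by simp : ¬(1 : Fin 2) = 0), if_neg (by simp : ¬(1 : Fin 2) = 0)]
      refine if_congr ?_ rfl rfl
      rw [Fin.ext_iff, Fin.ext_iff]
      simp [xor_eq_zero_iff]
    · rw [if_neg hc, if_neg hc]

lemma sqrt2_inv_pow : ((Real.sqrt 2 : ℂ))⁻¹ ^ 2 = 1 / 2 := by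
  rw [sq, sqrt2_inv_sq]; norm_num

lemma Stil_col (h : ℕ) (U : Matrix (Fin (2 ^ h)) (Fin (2 ^ h)) ℂ) (p : ℕ)
    (k : Fin (2 ^ h)) (x : Ix h) :
    (Stil h ^ p * (UCopy h * (UCS h U * Htil h))) x (0, 0, k) =
      if x.2.2 = k then (Real.sqrt 2 : ℂ)⁻¹ *
        (if x.2.1 = 0 then U x.1 0
         else Complex.I ^ p * (if x.1 = k then 1 else 0)) else 0 := by
  rw [Stil_eq, midM_pow, midM_mul_apply, Fin.sum_univ_two]
  rcases x with ⟨j, b, c⟩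
  simp only
  rw [UCopy_col, UCopy_col]
  fin_cases b <;> by_cases hc : c = k <;>
    simp [Sgate_pow, hc] <;> ring

lemma Htil_mul_apply (h : ℕ) (N : Matrix (Ix h) (Ix h) ℂ) (x y : Ix h) :
    (Htil h * N) x y = ∑ b, Hgate x.2.1 b * N (x.1, b, x.2.2) y := by
  rw [Htil_eq]; exact midM_mul_apply _ _ _ _

lemma Wop_col (h : ℕ) (U : Matrix (Fin (2 ^ h)) (Fin (2 ^ h)) ℂ) (p : ℕ)
    (k : Fin (2 ^ h)) (x : Ix h) :
    Wop h U p x (0, 0, k) =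
      if x.2.2 = k then
        (2 : ℂ)⁻¹ * (U x.1 0 + Complex.I ^ p * (if x.1 = k then zeta x.2.1 else 0))
      else 0 := by
  have ha : Wop h U p = Htil h * (Stil h ^ p * (UCopy h * (UCS h U * Htil h))) := by
    unfold Wop; simp only [mul_assoc]
  rw [ha, Htil_mul_apply, Fin.sum_univ_two]
  rcases x with ⟨j, b, c⟩
  simp only
  rw [Stil_col, Stil_col]
  fin_cases b <;> by_cases hc : c = k <;> by_cases hj : j = k <;>
    simp [Hgate, zeta, hc, hj] <;> ring_nf <;> (try rw [sqrt2_inv_pow]) <;> (try ring)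

lemma Ztil_mul_apply (h : ℕ) (N : Matrix (Ix h) (Ix h) ℂ) (x y : Ix h) :
    (Ztil h * N) x y = zeta x.2.1 * N x y := by
  rw [Ztil_eq, midM_mul_apply, Fin.sum_univ_two]
  rcases x with ⟨j, b, c⟩
  fin_cases b <;> simp [Zgate, zeta]

lemma M_entry (h : ℕ) (U : Matrix (Fin (2 ^ h)) (Fin (2 ^ h)) ℂ) (p : ℕ)
    (c k : Fin (2 ^ h)) :
    ((Wop h U p)ᴴ * (Ztil h * Wop h U p)) (0, 0, c) (0, 0, k) =
      if c = k then
        (2 : ℂ)⁻¹ * (Complex.I ^ p * star (U k 0) + (star Complex.I) ^ p * U k 0)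
      else 0 := by
  rw [Matrix.mul_apply]
  have hterm : ∀ z : Ix h, (Wop h U p)ᴴ ((0 : Fin (2 ^ h)), (0 : Fin 2), c) z *
        (Ztil h * Wop h U p) z (0, 0, k) =
      star (if z.2.2 = c then
          (2 : ℂ)⁻¹ * (U z.1 0 + Complex.I ^ p * (if z.1 = c then zeta z.2.1 else 0)) else 0) *
      (zeta z.2.1 *
        (if z.2.2 = k then
          (2 : ℂ)⁻¹ * (U z.1 0 + Complex.I ^ p * (if z.1 = k then zeta z.2.1 else 0)) else 0)) := by
    intro z
    rw [conjTranspose_apply, Ztil_mul_apply, Wop_col, Wop_col]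
  simp_rw [hterm]
  by_cases hck : c = k
  · subst hck
    rw [sum_Ix_third _ c (by intro x hx; rw [if_neg hx]; simp)]
    trans (∑ j : Fin (2 ^ h), if j = c then
        (2 : ℂ)⁻¹ * (Complex.I ^ p * star (U c 0) + (star Complex.I) ^ p * U c 0) else 0)
    · refine Finset.sum_congr rfl fun j _ => ?_
      by_cases hj : j = c
      · subst hj
        simp only [if_pos rfl, zeta, one_mul]
        norm_num [star_mul', star_add, star_pow]
        ring
      · simp only [if_pos rfl, if_neg hj, zeta, mul_zero, add_zero, one_mul]
        norm_num [star_mul', star_add, star_pow]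
        try ring
    · rw [Finset.sum_ite_eq']
      simp
  · rw [if_neg hck]
    refine Finset.sum_eq_zero fun z _ => ?_
    by_cases hzc : z.2.2 = c
    · rw [if_neg (show ¬ z.2.2 = k from fun e => hck ((hzc.symm.trans e)))]
      simp
    · rw [if_neg hzc]
      simp

/-! ### Entry computations for `USp` and `Uprime` -/

lemma Zgate_ct : Zgateᴴ = Zgate := by
  ext i j; fin_cases i <;> fin_cases j <;> simp [Zgate, conjTranspose_apply]

lemma Ztil_ct (h : ℕ) : (Ztil h)ᴴ = Ztil h := by
  rw [Ztil_eq, midM_ct, Zgate_ct]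

lemma Rop_ct (h : ℕ) : (Rop h)ᴴ = Rop h := by
  rw [Rop_eq, conjTranspose_sub, conjTranspose_smul, conjTranspose_one, Pi0_ct]
  norm_num [Complex.star_def]

lemma XZX_eq : Xgate * Zgate * Xgate = !![(-1 : ℂ), 0; 0, 1] := by
  rw [Xgate, Zgate, Matrix.mul_fin_two, Matrix.mul_fin_two]
  norm_num

lemma Pi0_mul_apply (h : ℕ) (N : Matrix (Ix h) (Ix h) ℂ) (x y : Ix h) :
    (Pi0 h * N) x y = if x.1 = 0 ∧ x.2.1 = 0 then N (0, 0, x.2.2) y else 0 := by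
  rw [Matrix.mul_apply]
  by_cases hx : x.1 = 0 ∧ x.2.1 = 0
  · rw [if_pos hx, Fintype.sum_eq_single ((0, 0, x.2.2) : Ix h)]
    · simp [Pi0, hx.1, hx.2]
    · intro z hz
      have e : Pi0 h x z = 0 := by
        simp only [Pi0, of_apply]; rw [if_neg]; rintro ⟨-, -, e1, e2, e3⟩
        exact hz (Prod.ext_iff.mpr ⟨e1, Prod.ext_iff.mpr ⟨e2, e3.symm⟩⟩)
      rw [e, zero_mul]
  · rw [if_neg hx]
    refine Finset.sum_eq_zero fun z _ => ?_
    have e : Pi0 h x z = 0 := by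
      simp only [Pi0, of_apply]; rw [if_neg]; rintro ⟨e1, e2, -⟩; exact hx ⟨e1, e2⟩
    rw [e, zero_mul]

lemma Rop_mul_apply (h : ℕ) (N : Matrix (Ix h) (Ix h) ℂ) (x y : Ix h) :
    (Rop h * N) x y =
      N x y - 2 * (if x.1 = 0 ∧ x.2.1 = 0 then N (0, 0, x.2.2) y else 0) := by
  rw [Rop_eq, sub_mul, one_mul, smul_mul_assoc, Matrix.sub_apply, Matrix.smul_apply,
    Pi0_mul_apply, smul_eq_mul]

lemma Rop_col (h : ℕ) (k : Fin (2 ^ h)) (z : Ix h) :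
    Rop h z (0, 0, k) =
      -(if z = ((0 : Fin (2 ^ h)), (0 : Fin 2), k) then 1 else 0) := by
  rcases z with ⟨j, b, c⟩
  by_cases h1 : j = 0 <;> by_cases h2 : b = 0 <;> by_cases h3 : c = k <;>
    simp [Rop, Prod.ext_iff, h1, h2, h3] <;> norm_num

lemma mul_Rop_col (h : ℕ) (N : Matrix (Ix h) (Ix h) ℂ) (x : Ix h) (k : Fin (2 ^ h)) :
    (N * Rop h) x (0, 0, k) = -(N x (0, 0, k)) := by
  rw [Matrix.mul_apply]
  have e : ∀ z : Ix h, N x z * Rop h z (0, 0, k) =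
      -(if z = ((0 : Fin (2 ^ h)), (0 : Fin 2), k) then N x z else 0) := by
    intro z
    rw [Rop_col]
    by_cases hz : z = ((0 : Fin (2 ^ h)), (0 : Fin 2), k) <;> simp [hz]
  simp_rw [e]
  rw [Finset.sum_neg_distrib, Finset.sum_ite_eq']
  simp

lemma qTens_left (h : ℕ) (D : Matrix (Fin 2) (Fin 2) ℂ)
    (N : Matrix (Fin 2 × Ix h) (Fin 2 × Ix h) ℂ) (x : Ix h) (y : Fin 2 × Ix h) :
    (qTens h D 1 * N) ((0 : Fin 2), x) y = D 0 0 * N (0, x) y + D 0 1 * N (1, x) y :=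
  qT_left D N x y

lemma qTens_sandwich (h : ℕ) (A A' : Matrix (Fin 2) (Fin 2) ℂ)
    (B B' P Q : Matrix (Ix h) (Ix h) ℂ) (x y : Ix h) :
    (qTens h A B * (ctrlChoice h P Q * qTens h A' B')) ((0 : Fin 2), x) ((0 : Fin 2), y)
    = A 0 0 * A' 0 0 * (B * (P * B')) x y + A 0 1 * A' 1 0 * (B * (Q * B')) x y :=
  sandwich A A' B B' P Q x y

lemma qTens'_sandwich (h : ℕ) (A A' : Matrix (Fin 2) (Fin 2) ℂ)
    (B B' P Q : Matrix (Fin 2 × Ix h) (Fin 2 × Ix h) ℂ) (x y : Fin 2 × Ix h) :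
    (qTens' h A B * (ctrlChoice' h P Q * qTens' h A' B')) ((0 : Fin 2), x) ((0 : Fin 2), y)
    = A 0 0 * A' 0 0 * (B * (P * B')) x y + A 0 1 * A' 1 0 * (B * (Q * B')) x y :=
  sandwich A A' B B' P Q x y

lemma Hgate00 : Hgate 0 0 = (Real.sqrt 2 : ℂ)⁻¹ := by simp [Hgate]
lemma Hgate01 : Hgate 0 1 = (Real.sqrt 2 : ℂ)⁻¹ := by simp [Hgate]
lemma Hgate10 : Hgate 1 0 = (Real.sqrt 2 : ℂ)⁻¹ := by simp [Hgate]

lemma USp_entry (h : ℕ) {U : Matrix (Fin (2 ^ h)) (Fin (2 ^ h)) ℂ}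
    (hU₁ : U * Uᴴ = 1) (hU₂ : Uᴴ * U = 1) (p : ℕ) (z : Ix h) (k : Fin (2 ^ h)) :
    USp h U p ((0 : Fin 2), z) ((0 : Fin 2), ((0 : Fin (2 ^ h)), (0 : Fin 2), k)) =
      if z.1 = 0 ∧ z.2.1 = 0 then
        ((Wop h U p)ᴴ * (Ztil h * Wop h U p)) (0, 0, z.2.2) (0, 0, k)
      else 0 := by
  have hWW : (Wop h U p)ᴴ * Wop h U p = 1 := (Wop_uni h hU₁ hU₂ p).2
  have hGW : (Wop h U p)ᴴ * (Gop h U p * Wop h U p)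
      = Rop h * ((Wop h U p)ᴴ * (Ztil h * Wop h U p)) := by
    unfold Gop
    rw [show (Wop h U p * Rop h * (Wop h U p)ᴴ * Ztil h) * Wop h U p
        = Wop h U p * (Rop h * ((Wop h U p)ᴴ * (Ztil h * Wop h U p))) from by
      simp only [mul_assoc]]
    rw [← mul_assoc, hWW, one_mul]
  have hGct : (Gop h U p)ᴴ = Ztil h * (Wop h U p * (Rop h * (Wop h U p)ᴴ)) := by
    unfold Gop
    rw [conjTranspose_mul, conjTranspose_mul, conjTranspose_mul,
      conjTranspose_conjTranspose, Ztil_ct, Rop_ct]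
    try simp only [mul_assoc]
  have hGW' : (Wop h U p)ᴴ * ((Gop h U p)ᴴ * Wop h U p)
      = ((Wop h U p)ᴴ * (Ztil h * Wop h U p)) * Rop h := by
    rw [hGct]
    simp only [mul_assoc]
    rw [hWW, mul_one]
  have ha : USp h U p = qTens h (Xgate * Zgate * Xgate) 1 *
      (qTens h Hgate (Wop h U p)ᴴ *
        (ctrlChoice h (Gop h U p) (Gop h U p)ᴴ * qTens h Hgate (Wop h U p))) := by
    unfold USp; simp only [mul_assoc]
  rw [ha, qTens_left, qTens_sandwich,
    show (Xgate * Zgate * Xgate) 0 0 = -1 from by rw [XZX_eq]; simp,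
    show (Xgate * Zgate * Xgate) 0 1 = 0 from by rw [XZX_eq]; simp,
    Hgate00, Hgate01, Hgate10, sqrt2_inv_sq, hGW, hGW',
    Rop_mul_apply, mul_Rop_col]
  by_cases hz : z.1 = 0 ∧ z.2.1 = 0 <;> simp [hz] <;> ring

lemma Uprime_entry (h : ℕ) {U : Matrix (Fin (2 ^ h)) (Fin (2 ^ h)) ℂ}
    (hU₁ : U * Uᴴ = 1) (hU₂ : Uᴴ * U = 1) (k : Fin (2 ^ h)) (z : Ix h) :
    Uprime h U ((0 : Fin 2), ((0 : Fin 2), z))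
        ((0 : Fin 2), ((0 : Fin 2), ((0 : Fin (2 ^ h)), (0 : Fin 2), k))) =
      (1 / 2 : ℂ) * U k 0 * eVec h k z := by
  have ha : Uprime h U = qTens' h Hgate 1 *
      (ctrlChoice' h (USp h U 0) (Complex.I • USp h U 1) * qTens' h Hgate 1) := by
    unfold Uprime; simp only [mul_assoc]
  rw [ha, qTens'_sandwich, Matrix.mul_one, Matrix.mul_one, Matrix.one_mul, Matrix.one_mul,
    Hgate00, Hgate01, Hgate10, sqrt2_inv_sq, Matrix.smul_apply,
    USp_entry h hU₁ hU₂ 0 z k, USp_entry h hU₁ hU₂ 1 z k]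
  by_cases hz : z.1 = 0 ∧ z.2.1 = 0
  · rw [if_pos hz, if_pos hz, M_entry, M_entry]
    by_cases hzk : z.2.2 = k
    · rw [if_pos hzk, if_pos hzk]
      have hev : eVec h k z = 1 := by
        rcases z with ⟨a, b, c⟩
        simp only at hz hzk
        simp [eVec, Prod.ext_iff, hz.1, hz.2, hzk]
      rw [hev]
      simp only [pow_zero, pow_one, one_mul, Complex.star_def, Complex.conj_I, smul_eq_mul]
      ring_nf
      rw [Complex.I_sq]
      ring
    · rw [if_neg hzk, if_neg hzk]
      have hev : eVec h k z = 0 := by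
        rcases z with ⟨a, b, c⟩
        simp only at hzk
        simp [eVec, Prod.ext_iff, hzk]
      rw [hev]
      simp
  · rw [if_neg hz, if_neg hz]
    have hev : eVec h k z = 0 := by
      rcases z with ⟨a, b, c⟩
      simp only at hz
      simp only [eVec, Prod.ext_iff]
      rw [if_neg]
      rintro ⟨e1, e2, e3⟩
      exact hz ⟨e1, e2⟩
    rw [hev]
    simp
/-- diagonal block-encoding of amplitudes. `U′` is unitary;
the component of `U′(e₀ ⊗ e₀ ⊗ e₀ ⊗ e₀ ⊗ e_k)` on the first two qubits being
`|0⟩|0⟩` is exactly `(1/2)·ψ_k·(e₀ ⊗ e₀ ⊗ e_k)`; in particular the compression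
of `U′` onto the all-zero ancillas is `(1/2)·diag(ψ)`, so `U′` is a
`(2,2,0)`-block-encoding of `diag(ψ)` whose `2h−1` remaining ancilla qubits
return to the zero state. -/
theorem Uprime_block_encodes_diag (h : ℕ) (hh : 1 ≤ h)
    (U : Matrix (Fin (2 ^ h)) (Fin (2 ^ h)) ℂ)
    (hU₁ : U * Uᴴ = 1) (hU₂ : Uᴴ * U = 1) :
    (Uprime h U * (Uprime h U)ᴴ = 1 ∧ (Uprime h U)ᴴ * Uprime h U = 1) ∧
    (∀ k : Fin (2 ^ h), ∀ z : Ix h,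
      (Uprime h U).mulVec (fun x => if x = (0, (0, (0, 0, k))) then 1 else 0)
          (0, (0, z)) =
        (1 / 2 : ℂ) * U k 0 * eVec h k z) ∧
    (∀ k k' : Fin (2 ^ h),
      Uprime h U (0, (0, (0, 0, k))) (0, (0, (0, 0, k'))) =
        (1 / 2 : ℂ) * (if k = k' then U k 0 else 0)) := by
  refine ⟨⟨(Uprime_uni h hU₁ hU₂).1, (Uprime_uni h hU₁ hU₂).2⟩, ?_, ?_⟩
  · intro k z
    rw [mulVec_ind]
    exact Uprime_entry h hU₁ hU₂ k z
  · intro k k'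
    rw [Uprime_entry h hU₁ hU₂ k' (0, 0, k)]
    by_cases e : k = k'
    · subst e
      simp [eVec]
    · rw [show eVec h k' ((0 : Fin (2 ^ h)), (0 : Fin 2), k) = 0 from by
        simp only [eVec]
        rw [if_neg]
        intro ee
        exact e (by
          have := congrArg (fun t : Ix h => t.2.2) ee
          simpa using this)]
      rw [if_neg e]
      ring

end DiagBlockEncoding
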